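/- Let Λ be a row-finite k-graph with no sources such that Λ⁰ is a maximal tail. For p, q ∈ ℕ^k, we have (p,q) ∈ Σ_Λ if and only if p - q ∈ Per(Λ). -/

import Mathlib

/-- A `P`-graph structure on a set `V` of vertices (objects) and a set `E` of paths
(morphisms): a small category with range `r`, source `s`, identities `vert`,
a (partially meaningful) composition `comp`, together with a degree functor `d : E → P`
satisfying the unique factorisation property. -/
structure PGraphStr (P : Type) [AddCommMonoid P] (V : Type) (E : Type) where
  r : E → V
  s : E → V
  d : E → P
  vert : V → E
  comp : E → E → E
  r_vert : ∀ v, r (vert v) = v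
  s_vert : ∀ v, s (vert v) = v
  d_vert : ∀ v, d (vert v) = 0
  r_comp : ∀ μ ν, s μ = r ν → r (comp μ ν) = r μ
  s_comp : ∀ μ ν, s μ = r ν → s (comp μ ν) = s ν
  d_comp : ∀ μ ν, s μ = r ν → d (comp μ ν) = d μ + d ν
  comp_assoc : ∀ μ ν ξ, s μ = r ν → s ν = r ξ →
    comp (comp μ ν) ξ = comp μ (comp ν ξ)
  vert_comp : ∀ μ, comp (vert (r μ)) μ = μ
  comp_vert : ∀ μ, comp μ (vert (s μ)) = μ
  factor : ∀ ξ p q, d ξ = p + q →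
    ∃! ηζ : E × E, s ηζ.1 = r ηζ.2 ∧ d ηζ.1 = p ∧ d ηζ.2 = q ∧ comp ηζ.1 ηζ.2 = ξ

variable {k : ℕ} {V E : Type}

/-- A `k`-graph (an `ℕ^k`-graph) is row-finite with no sources when
`0 < |vΛ^n| < ∞` for every vertex `v` and degree `n`. -/
def RowFiniteNoSources (Λ : PGraphStr (Fin k → ℕ) V E) : Prop :=
  ∀ (v : V) (n : Fin k → ℕ),
    {e : E | Λ.r e = v ∧ Λ.d e = n}.Finite ∧ {e : E | Λ.r e = v ∧ Λ.d e = n}.Nonempty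

/-- An infinite path in a `k`-graph `Λ`: a degree-preserving functor `Ω_{ℕ^k} → Λ`,
recorded by its segments `x(m,n)` for `m ≤ n`. -/
structure InfPath (Λ : PGraphStr (Fin k → ℕ) V E) where
  seg : ∀ m n : Fin k → ℕ, m ≤ n → E
  d_seg : ∀ m n (h : m ≤ n), Λ.d (seg m n h) = n - m
  src : ∀ m n p (h₁ : m ≤ n) (h₂ : n ≤ p), Λ.s (seg m n h₁) = Λ.r (seg n p h₂)
  seg_self : ∀ m, seg m m le_rfl = Λ.vert (Λ.r (seg m m le_rfl))
  comp_seg : ∀ m n p (h₁ : m ≤ n) (h₂ : n ≤ p),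
    Λ.comp (seg m n h₁) (seg n p h₂) = seg m p (h₁.trans h₂)

/-- The range `x(0)` of an infinite path. -/
def InfPath.range {Λ : PGraphStr (Fin k → ℕ) V E} (x : InfPath Λ) : V :=
  Λ.r (x.seg 0 0 le_rfl)

/-- The shift `σ^p(x)`, with `σ^p(x)(m,n) = x(m+p,n+p)`. -/
def InfPath.shift {Λ : PGraphStr (Fin k → ℕ) V E} (p : Fin k → ℕ) (x : InfPath Λ) :
    InfPath Λ where
  seg m n h := x.seg (m + p) (n + p) (add_le_add h le_rfl)
  d_seg m n h := by
    rw [x.d_seg]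
    funext i
    simp [Nat.add_sub_add_right]
  src m n q h₁ h₂ := x.src _ _ _ _ _
  seg_self m := x.seg_self (m + p)
  comp_seg m n q h₁ h₂ := x.comp_seg _ _ _ _ _

/-- `Extends Λ y μ x` means `y = μx`: `y(0, d(μ)) = μ` and `σ^{d(μ)}(y) = x`. -/
def Extends (Λ : PGraphStr (Fin k → ℕ) V E) (y : InfPath Λ) (μ : E) (x : InfPath Λ) :
    Prop :=
  y.seg 0 (Λ.d μ) zero_le = μ ∧ y.shift (Λ.d μ) = x

/-- The relation `μ ∼ ν`: `s(μ) = s(ν)` and `μx = νx` for every infinite path `x`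
with range `s(μ)`. -/
def CKeq (Λ : PGraphStr (Fin k → ℕ) V E) (μ ν : E) : Prop :=
  Λ.s μ = Λ.s ν ∧ ∀ x y z : InfPath Λ, x.range = Λ.s μ →
    Extends Λ y μ x → Extends Λ z ν x → y = z

/-- The periodicity set `Per(Λ) = {d(μ) - d(ν) : μ ∼ ν} ⊆ ℤ^k`. -/
def PerSet (Λ : PGraphStr (Fin k → ℕ) V E) : Set (Fin k → ℤ) :=
  {g | ∃ μ ν : E, CKeq Λ μ ν ∧ g = fun i => (Λ.d μ i : ℤ) - (Λ.d ν i : ℤ)}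

/-- A maximal tail in a `k`-graph. -/
def IsMaximalTail (Λ : PGraphStr (Fin k → ℕ) V E) (T : Set V) : Prop :=
  T.Nonempty ∧
  (∀ v₁ ∈ T, ∀ v₂ ∈ T, ∃ w ∈ T,
    (∃ e : E, Λ.r e = v₁ ∧ Λ.s e = w) ∧ ∃ e : E, Λ.r e = v₂ ∧ Λ.s e = w) ∧
  (∀ v ∈ T, ∀ i : Fin k,
    ∃ e : E, Λ.r e = v ∧ Λ.d e = Pi.single i 1 ∧ Λ.s e ∈ T) ∧
  (∀ w ∈ T, ∀ (v : V) (e : E), Λ.r e = v → Λ.s e = w → v ∈ T)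

/-- `Σ_v = {(p,q) : σ^p(x) = σ^q(x) for all x ∈ vΛ^∞}`. -/
def SigmaV (Λ : PGraphStr (Fin k → ℕ) V E) (v : V) :
    Set ((Fin k → ℕ) × (Fin k → ℕ)) :=
  {pq | ∀ x : InfPath Λ, x.range = v → x.shift pq.1 = x.shift pq.2}

/-- `Σ_Λ = ⋃_v Σ_v`. -/
def SigmaL (Λ : PGraphStr (Fin k → ℕ) V E) : Set ((Fin k → ℕ) × (Fin k → ℕ)) :=
  ⋃ v : V, SigmaV Λ v

/-- The hereditary set `H_Per`. -/
def HPer (Λ : PGraphStr (Fin k → ℕ) V E) : Set V :=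
  {v | ∀ lam : E, Λ.r lam = v → ∀ m : Fin k → ℕ,
    (fun i => (Λ.d lam i : ℤ) - (m i : ℤ)) ∈ PerSet Λ →
    ∃ μ : E, Λ.r μ = v ∧ Λ.d μ = m ∧ CKeq Λ lam μ}

/-- The coordinatewise inclusion `ℕ^k →+ ℤ^k`. -/
def intCast (k : ℕ) : (Fin k → ℕ) →+ (Fin k → ℤ) where
  toFun n := fun i => (n i : ℤ)
  map_zero' := by funext i; simp
  map_add' a b := by funext i; simp

/-- The composite `ℕ^k → ℤ^k → ℤ^k/H`. -/
def quotHom (k : ℕ) (H : AddSubgroup (Fin k → ℤ)) :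
    (Fin k → ℕ) →+ (Fin k → ℤ) ⧸ H :=
  (QuotientAddGroup.mk' H).comp (intCast k)

/-- The submonoid `P = f(ℕ^k)` of `ℤ^k/H`. -/
def PMon (k : ℕ) (H : AddSubgroup (Fin k → ℤ)) : AddSubmonoid ((Fin k → ℤ) ⧸ H) :=
  AddMonoidHom.mrange (quotHom k H)

theorem mem_PMon (k : ℕ) (H : AddSubgroup (Fin k → ℤ)) (n : Fin k → ℕ) :
    quotHom k H n ∈ PMon k H :=
  ⟨n, rfl⟩

section Aux

variable {k : ℕ} {V E : Type} {Λ : PGraphStr (Fin k → ℕ) V E}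

/-- A degree-zero morphism is a vertex. -/
theorem eq_vert_of_d_zero {e : E} (h : Λ.d e = 0) : e = Λ.vert (Λ.r e) := by
  have hfac := Λ.factor e 0 0 (by rw [h, add_zero])
  have h1 : Λ.s (Λ.vert (Λ.r e)) = Λ.r e ∧ Λ.d (Λ.vert (Λ.r e)) = 0 ∧ Λ.d e = 0 ∧
      Λ.comp (Λ.vert (Λ.r e)) e = e :=
    ⟨Λ.s_vert _, Λ.d_vert _, h, Λ.vert_comp e⟩
  have h2 : Λ.s e = Λ.r (Λ.vert (Λ.s e)) ∧ Λ.d e = 0 ∧ Λ.d (Λ.vert (Λ.s e)) = 0 ∧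
      Λ.comp e (Λ.vert (Λ.s e)) = e :=
    ⟨(Λ.r_vert _).symm, h, Λ.d_vert _, Λ.comp_vert e⟩
  have := hfac.unique (y₁ := (Λ.vert (Λ.r e), e)) (y₂ := (e, Λ.vert (Λ.s e))) h1 h2
  exact (congrArg Prod.fst this).symm

theorem s_eq_r_of_d_zero {e : E} (h : Λ.d e = 0) : Λ.s e = Λ.r e := by
  conv_lhs => rw [eq_vert_of_d_zero h]
  rw [Λ.s_vert]

/-- Congruence for segments. -/
theorem seg_congr (x : InfPath Λ) {m n m' n' : Fin k → ℕ} (hm : m = m') (hn : n = n')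
    (h : m ≤ n) (h' : m' ≤ n') : x.seg m n h = x.seg m' n' h' := by
  subst hm; subst hn; rfl

theorem r_seg (x : InfPath Λ) (m n : Fin k → ℕ) (h : m ≤ n) :
    Λ.r (x.seg m n h) = Λ.r (x.seg m m le_rfl) := by
  have h1 := x.src m m n le_rfl h
  conv_lhs at h1 => rw [x.seg_self m, Λ.s_vert]
  exact h1.symm

theorem range_r (x : InfPath Λ) (n : Fin k → ℕ) (h : (0:Fin k → ℕ) ≤ n) :
    Λ.r (x.seg 0 n h) = x.range :=
  r_seg x 0 n h

theorem s_seg (x : InfPath Λ) (m n : Fin k → ℕ) (h : m ≤ n) :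
    Λ.s (x.seg m n h) = Λ.r (x.seg n n le_rfl) :=
  x.src m n n h le_rfl

theorem d_seg_zero (x : InfPath Λ) (n : Fin k → ℕ) (h : (0:Fin k → ℕ) ≤ n) :
    Λ.d (x.seg 0 n h) = n := by
  rw [x.d_seg]; funext i; show n i - 0 = n i; omega

/-- Initial segments determine all sub-segments. -/
theorem seg_zero_determines {x y : InfPath Λ} {n : Fin k → ℕ}
    (hn : x.seg 0 n zero_le = y.seg 0 n zero_le) {m : Fin k → ℕ} (hm : m ≤ n) :
    x.seg 0 m zero_le = y.seg 0 m zero_le ∧ x.seg m n hm = y.seg m n hm := by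
  have hfac := Λ.factor (x.seg 0 n zero_le) m (n - m)
    (by rw [d_seg_zero]; funext i; show n i = m i + (n i - m i); have hmi : m i ≤ n i := hm i; omega)
  have h1 : Λ.s (x.seg 0 m zero_le) = Λ.r (x.seg m n hm) ∧
      Λ.d (x.seg 0 m zero_le) = m ∧ Λ.d (x.seg m n hm) = n - m ∧
      Λ.comp (x.seg 0 m zero_le) (x.seg m n hm) = x.seg 0 n zero_le :=
    ⟨x.src 0 m n zero_le hm, d_seg_zero x m zero_le, x.d_seg m n hm,
      x.comp_seg 0 m n zero_le hm⟩
  have h2 : Λ.s (y.seg 0 m zero_le) = Λ.r (y.seg m n hm) ∧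
      Λ.d (y.seg 0 m zero_le) = m ∧ Λ.d (y.seg m n hm) = n - m ∧
      Λ.comp (y.seg 0 m zero_le) (y.seg m n hm) = x.seg 0 n zero_le := by
    rw [hn]
    exact ⟨y.src 0 m n zero_le hm, d_seg_zero y m zero_le, y.d_seg m n hm,
      y.comp_seg 0 m n zero_le hm⟩
  have := hfac.unique (y₁ := (x.seg 0 m zero_le, x.seg m n hm))
    (y₂ := (y.seg 0 m zero_le, y.seg m n hm)) h1 h2
  exact ⟨congrArg Prod.fst this, congrArg Prod.snd this⟩

/-- Extensionality for infinite paths via initial segments. -/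
theorem InfPath.ext' {x y : InfPath Λ}
    (h : ∀ n : Fin k → ℕ, x.seg 0 n zero_le = y.seg 0 n zero_le) : x = y := by
  have hseg : x.seg = y.seg := by
    funext m n hmn
    exact (seg_zero_determines (h n) hmn).2
  cases x; cases y
  cases hseg
  rfl

theorem shift_seg (x : InfPath Λ) (p : Fin k → ℕ) (m n : Fin k → ℕ) (h : m ≤ n) :
    (x.shift p).seg m n h = x.seg (m + p) (n + p) (add_le_add_left h p) := rfl

theorem shift_shift (x : InfPath Λ) (a b : Fin k → ℕ) :
    (x.shift a).shift b = x.shift (a + b) := by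
  apply InfPath.ext'
  intro n
  show x.seg (0 + b + a) (n + b + a) _ = x.seg (0 + (a + b)) (n + (a + b)) _
  exact seg_congr x (by rw [add_assoc, add_comm b a]) (by rw [add_assoc, add_comm b a]) _ _

/-- `a` divides `b`: `b = a ∘ e` for some `e`. -/
def PDiv (Λ : PGraphStr (Fin k → ℕ) V E) (a b : E) : Prop :=
  ∃ e, Λ.s a = Λ.r e ∧ Λ.comp a e = b

theorem pdiv_refl (a : E) : PDiv Λ a a :=
  ⟨Λ.vert (Λ.s a), (Λ.r_vert _).symm, Λ.comp_vert a⟩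

theorem pdiv_trans {a b c : E} (h1 : PDiv Λ a b) (h2 : PDiv Λ b c) : PDiv Λ a c := by
  obtain ⟨e, he, hce⟩ := h1
  obtain ⟨f, hf, hcf⟩ := h2
  have hef : Λ.s e = Λ.r f := by rw [← Λ.s_comp a e he, hce]; exact hf
  refine ⟨Λ.comp e f, ?_, ?_⟩
  · rw [Λ.r_comp e f hef]; exact he
  · rw [← Λ.comp_assoc a e f he hef, hce, hcf]

theorem r_eq_of_pdiv {a b : E} (h : PDiv Λ a b) : Λ.r b = Λ.r a := by
  obtain ⟨e, he, hce⟩ := h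
  rw [← hce, Λ.r_comp a e he]

/-- The initial segment of degree `n` of a morphism. -/
noncomputable def initSeg (Λ : PGraphStr (Fin k → ℕ) V E) (ξ : E) (n r : Fin k → ℕ)
    (h : Λ.d ξ = n + r) : E :=
  (Λ.factor ξ n r h).choose.1

theorem initSeg_spec (ξ : E) (n r : Fin k → ℕ) (h : Λ.d ξ = n + r) :
    Λ.s (initSeg Λ ξ n r h) = Λ.r (Λ.factor ξ n r h).choose.2 ∧
    Λ.d (initSeg Λ ξ n r h) = n ∧ Λ.d (Λ.factor ξ n r h).choose.2 = r ∧
    Λ.comp (initSeg Λ ξ n r h) (Λ.factor ξ n r h).choose.2 = ξ :=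
  (Λ.factor ξ n r h).choose_spec.1

theorem initSeg_unique {ξ : E} {n r : Fin k → ℕ} {h : Λ.d ξ = n + r} {η ζ : E}
    (h1 : Λ.s η = Λ.r ζ) (h2 : Λ.d η = n) (h3 : Λ.d ζ = r) (h4 : Λ.comp η ζ = ξ) :
    η = initSeg Λ ξ n r h :=
  congrArg Prod.fst ((Λ.factor ξ n r h).choose_spec.2 (η, ζ) ⟨h1, h2, h3, h4⟩)

theorem d_initSeg (ξ : E) (n r : Fin k → ℕ) (h : Λ.d ξ = n + r) :
    Λ.d (initSeg Λ ξ n r h) = n := (initSeg_spec ξ n r h).2.1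

theorem pdiv_initSeg (ξ : E) (n r : Fin k → ℕ) (h : Λ.d ξ = n + r) :
    PDiv Λ (initSeg Λ ξ n r h) ξ :=
  ⟨(Λ.factor ξ n r h).choose.2, (initSeg_spec ξ n r h).1, (initSeg_spec ξ n r h).2.2.2⟩

theorem r_initSeg (ξ : E) (n r : Fin k → ℕ) (h : Λ.d ξ = n + r) :
    Λ.r (initSeg Λ ξ n r h) = Λ.r ξ :=
  (r_eq_of_pdiv (pdiv_initSeg ξ n r h)).symm

theorem eq_initSeg_of_pdiv {a ξ : E} {n r : Fin k → ℕ} (hdiv : PDiv Λ a ξ)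
    (hda : Λ.d a = n) (h : Λ.d ξ = n + r) : a = initSeg Λ ξ n r h := by
  obtain ⟨e, he, hce⟩ := hdiv
  have hde : Λ.d e = r := by
    have := Λ.d_comp a e he
    rw [hce, h, hda] at this
    funext i
    have h2 : n i + r i = n i + Λ.d e i := congrFun this i
    omega
  exact initSeg_unique he hda hde hce

theorem initSeg_pdiv_initSeg {ξ : E} {m n rm rn : Fin k → ℕ} (hmn : m ≤ n)
    (hm : Λ.d ξ = m + rm) (hn : Λ.d ξ = n + rn) :
    PDiv Λ (initSeg Λ ξ m rm hm) (initSeg Λ ξ n rn hn) := by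
  set A := initSeg Λ ξ n rn hn with hA
  have hdA : Λ.d A = n := d_initSeg ξ n rn hn
  have hdA' : Λ.d A = m + (n - m) := by
    rw [hdA]; funext i; show n i = m i + (n i - m i); have hmi : m i ≤ n i := hmn i; omega
  have h1 : PDiv Λ (initSeg Λ A m (n - m) hdA') ξ :=
    pdiv_trans (pdiv_initSeg A m (n - m) hdA') (pdiv_initSeg ξ n rn hn)
  have h2 : initSeg Λ A m (n - m) hdA' = initSeg Λ ξ m rm hm :=
    eq_initSeg_of_pdiv h1 (d_initSeg A m (n - m) hdA') hm
  rw [← h2]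
  exact pdiv_initSeg A m (n - m) hdA'

end Aux
section MkPath

variable {k : ℕ} {V E : Type} {Λ : PGraphStr (Fin k → ℕ) V E}

variable {b : (Fin k → ℕ) → E}

theorem d_b_add {b : (Fin k → ℕ) → E} (hd : ∀ n, Λ.d (b n) = n) {m n : Fin k → ℕ}
    (h : m ≤ n) : Λ.d (b n) = m + (n - m) := by
  rw [hd]; funext i; show n i = m i + (n i - m i); have hmi : m i ≤ n i := h i; omega

/-- The middle segment `b m → b n`. -/
noncomputable def midSeg (b : (Fin k → ℕ) → E) (hd : ∀ n, Λ.d (b n) = n)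
    (hdiv : ∀ m n, m ≤ n → PDiv Λ (b m) (b n)) (m n : Fin k → ℕ) (h : m ≤ n) : E :=
  (Λ.factor (b n) m (n - m) (d_b_add hd h)).choose.2

theorem midSeg_spec (hd : ∀ n, Λ.d (b n) = n)
    (hdiv : ∀ m n, m ≤ n → PDiv Λ (b m) (b n)) (m n : Fin k → ℕ) (h : m ≤ n) :
    Λ.s (b m) = Λ.r (midSeg b hd hdiv m n h) ∧ Λ.d (midSeg b hd hdiv m n h) = n - m ∧
      Λ.comp (b m) (midSeg b hd hdiv m n h) = b n := by
  have hfst : (Λ.factor (b n) m (n - m) (d_b_add hd h)).choose.1 = b m :=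
    (eq_initSeg_of_pdiv (hdiv m n h) (hd m) (d_b_add hd h)).symm
  obtain ⟨h1, h2, h3, h4⟩ := (Λ.factor (b n) m (n - m) (d_b_add hd h)).choose_spec.1
  rw [hfst] at h1 h4
  exact ⟨h1, h3, h4⟩

theorem midSeg_unique (hd : ∀ n, Λ.d (b n) = n)
    (hdiv : ∀ m n, m ≤ n → PDiv Λ (b m) (b n)) {m n : Fin k → ℕ} {h : m ≤ n} {e : E}
    (h1 : Λ.s (b m) = Λ.r e) (h2 : Λ.d e = n - m) (h3 : Λ.comp (b m) e = b n) :
    e = midSeg b hd hdiv m n h := by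
  have := (Λ.factor (b n) m (n - m) (d_b_add hd h)).choose_spec.2 (b m, e)
    ⟨h1, hd m, h2, h3⟩
  exact congrArg Prod.snd this

/-- Build an infinite path from a compatible family of initial segments. -/
noncomputable def mkPath (b : (Fin k → ℕ) → E) (hd : ∀ n, Λ.d (b n) = n)
    (hdiv : ∀ m n, m ≤ n → PDiv Λ (b m) (b n)) : InfPath Λ where
  seg := midSeg b hd hdiv
  d_seg m n h := (midSeg_spec hd hdiv m n h).2.1
  src m n p h₁ h₂ := by
    have h1 : Λ.s (b n) = Λ.s (midSeg b hd hdiv m n h₁) :=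
      (midSeg_spec hd hdiv m n h₁).2.2 ▸
        Λ.s_comp (b m) (midSeg b hd hdiv m n h₁) (midSeg_spec hd hdiv m n h₁).1
  -- fix below
    rw [← h1]
    exact (midSeg_spec hd hdiv n p h₂).1
  seg_self m := by
    apply eq_vert_of_d_zero
    rw [(midSeg_spec hd hdiv m m le_rfl).2.1]
    funext i; show m i - m i = 0; omega
  comp_seg m n p h₁ h₂ := by
    apply midSeg_unique hd hdiv
    · rw [Λ.r_comp _ _ ?hsr]
      case hsr =>
        rw [← (midSeg_spec hd hdiv n p h₂).1]
        have h1 : Λ.s (b n) = Λ.s (midSeg b hd hdiv m n h₁) :=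
          (midSeg_spec hd hdiv m n h₁).2.2 ▸
            Λ.s_comp (b m) (midSeg b hd hdiv m n h₁) (midSeg_spec hd hdiv m n h₁).1
        exact h1.symm
      exact (midSeg_spec hd hdiv m n h₁).1
    · rw [Λ.d_comp, (midSeg_spec hd hdiv m n h₁).2.1, (midSeg_spec hd hdiv n p h₂).2.1]
      · funext i
        show (n i - m i) + (p i - n i) = p i - m i
        have h1i : m i ≤ n i := h₁ i
        have h2i : n i ≤ p i := h₂ i
        omega
      · rw [← (midSeg_spec hd hdiv n p h₂).1]
        have h1 : Λ.s (b n) = Λ.s (midSeg b hd hdiv m n h₁) :=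
          (midSeg_spec hd hdiv m n h₁).2.2 ▸
            Λ.s_comp (b m) (midSeg b hd hdiv m n h₁) (midSeg_spec hd hdiv m n h₁).1
        exact h1.symm
    · rw [← Λ.comp_assoc, (midSeg_spec hd hdiv m n h₁).2.2,
        (midSeg_spec hd hdiv n p h₂).2.2]
      · exact (midSeg_spec hd hdiv m n h₁).1
      · rw [← (midSeg_spec hd hdiv n p h₂).1]
        have h1 : Λ.s (b n) = Λ.s (midSeg b hd hdiv m n h₁) :=
          (midSeg_spec hd hdiv m n h₁).2.2 ▸
            Λ.s_comp (b m) (midSeg b hd hdiv m n h₁) (midSeg_spec hd hdiv m n h₁).1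
        exact h1.symm

theorem mkPath_seg (hd : ∀ n, Λ.d (b n) = n)
    (hdiv : ∀ m n, m ≤ n → PDiv Λ (b m) (b n)) (m n : Fin k → ℕ) (h : m ≤ n) :
    (mkPath b hd hdiv).seg m n h = midSeg b hd hdiv m n h := rfl

theorem mkPath_seg_zero (hd : ∀ n, Λ.d (b n) = n)
    (hdiv : ∀ m n, m ≤ n → PDiv Λ (b m) (b n)) (n : Fin k → ℕ) :
    (mkPath b hd hdiv).seg 0 n zero_le = b n := by
  have hb0 : Λ.d (b 0) = 0 := hd 0
  have hr0 : Λ.r (b n) = Λ.r (b 0) := r_eq_of_pdiv (hdiv 0 n zero_le)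
  symm
  apply midSeg_unique hd hdiv
  · rw [s_eq_r_of_d_zero hb0, hr0]
  · rw [hd]; funext i; show n i = n i - 0; omega
  · conv_lhs => rw [eq_vert_of_d_zero hb0, ← hr0, Λ.vert_comp (b n)]
  · exact zero_le

theorem mkPath_range (hd : ∀ n, Λ.d (b n) = n)
    (hdiv : ∀ m n, m ≤ n → PDiv Λ (b m) (b n)) :
    (mkPath b hd hdiv).range = Λ.r (b 0) := by
  exact congrArg Λ.r (mkPath_seg_zero hd hdiv 0)

end MkPath
section Concat

variable {k : ℕ} {V E : Type} {Λ : PGraphStr (Fin k → ℕ) V E}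

theorem s_r_seg {μ : E} {x : InfPath Λ} (hx : x.range = Λ.s μ) (a : Fin k → ℕ)
    (h : (0:Fin k → ℕ) ≤ a) : Λ.s μ = Λ.r (x.seg 0 a h) := by
  rw [range_r x a h, hx]

theorem d_concatC {μ : E} {x : InfPath Λ} (hx : x.range = Λ.s μ) (n : Fin k → ℕ) :
    Λ.d (Λ.comp μ (x.seg 0 (n - Λ.d μ) zero_le)) = n + (Λ.d μ - n) := by
  rw [Λ.d_comp _ _ (s_r_seg hx _ _), d_seg_zero]
  funext i
  show Λ.d μ i + (n i - Λ.d μ i) = n i + (Λ.d μ i - n i)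
  omega

/-- The initial segments of the concatenation `μx`. -/
noncomputable def concatB (μ : E) (x : InfPath Λ) (hx : x.range = Λ.s μ)
    (n : Fin k → ℕ) : E :=
  initSeg Λ (Λ.comp μ (x.seg 0 (n - Λ.d μ) zero_le)) n (Λ.d μ - n) (d_concatC hx n)

theorem d_concatB (μ : E) (x : InfPath Λ) (hx : x.range = Λ.s μ) (n : Fin k → ℕ) :
    Λ.d (concatB μ x hx n) = n :=
  d_initSeg _ _ _ _

theorem pdiv_concatC {μ : E} {x : InfPath Λ} (hx : x.range = Λ.s μ) {m n : Fin k → ℕ}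
    (hmn : m ≤ n) :
    PDiv Λ (Λ.comp μ (x.seg 0 (m - Λ.d μ) zero_le))
      (Λ.comp μ (x.seg 0 (n - Λ.d μ) zero_le)) := by
  have hmn' : m - Λ.d μ ≤ n - Λ.d μ := fun i => by
    have hmi : m i ≤ n i := hmn i
    show m i - Λ.d μ i ≤ n i - Λ.d μ i
    omega
  refine ⟨x.seg (m - Λ.d μ) (n - Λ.d μ) hmn', ?_, ?_⟩
  · rw [Λ.s_comp _ _ (s_r_seg hx _ _)]
    exact x.src _ _ _ _ _
  · rw [Λ.comp_assoc _ _ _ (s_r_seg hx _ _) (x.src _ _ _ _ _), x.comp_seg]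

theorem pdiv_concatB (μ : E) (x : InfPath Λ) (hx : x.range = Λ.s μ) {m n : Fin k → ℕ}
    (hmn : m ≤ n) : PDiv Λ (concatB μ x hx m) (concatB μ x hx n) := by
  have hdm : Λ.d (Λ.comp μ (x.seg 0 (n - Λ.d μ) zero_le)) = m + ((n - m) + (Λ.d μ - n)) := by
    rw [d_concatC hx n]
    funext i
    have hmi : m i ≤ n i := hmn i
    show n i + (Λ.d μ i - n i) = m i + ((n i - m i) + (Λ.d μ i - n i))
    omega
  have h1 : PDiv Λ (concatB μ x hx m) (Λ.comp μ (x.seg 0 (n - Λ.d μ) zero_le)) :=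
    pdiv_trans (pdiv_initSeg _ _ _ (d_concatC hx m)) (pdiv_concatC hx hmn)
  have h2 : concatB μ x hx m =
      initSeg Λ (Λ.comp μ (x.seg 0 (n - Λ.d μ) zero_le)) m ((n - m) + (Λ.d μ - n)) hdm :=
    eq_initSeg_of_pdiv h1 (d_concatB μ x hx m) hdm
  rw [h2]
  exact initSeg_pdiv_initSeg hmn hdm (d_concatC hx n)

/-- The concatenation `μx` of a finite path and an infinite path. -/
noncomputable def concat (μ : E) (x : InfPath Λ) (hx : x.range = Λ.s μ) : InfPath Λ :=
  mkPath (concatB μ x hx) (d_concatB μ x hx) (fun _ _ h => pdiv_concatB μ x hx h)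

theorem concat_seg_zero (μ : E) (x : InfPath Λ) (hx : x.range = Λ.s μ)
    (n : Fin k → ℕ) : (concat μ x hx).seg 0 n zero_le = concatB μ x hx n :=
  mkPath_seg_zero _ _ n

theorem concatB_add (μ : E) (x : InfPath Λ) (hx : x.range = Λ.s μ) (n : Fin k → ℕ) :
    concatB μ x hx (n + Λ.d μ) = Λ.comp μ (x.seg 0 n zero_le) := by
  have hc : Λ.comp μ (x.seg 0 ((n + Λ.d μ) - Λ.d μ) zero_le) =
      Λ.comp μ (x.seg 0 n zero_le) := by
    congr 1
    refine seg_congr x rfl ?_ _ _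
    funext i; show n i + Λ.d μ i - Λ.d μ i = n i; omega
  set A := Λ.comp μ (x.seg 0 n zero_le) with hA
  have hsA : Λ.s μ = Λ.r (x.seg 0 n zero_le) := s_r_seg hx n zero_le
  refine (initSeg_unique (η := A) (ζ := Λ.vert (Λ.s A)) ?_ ?_ ?_ ?_).symm
  · rw [Λ.r_vert]
  · rw [hA, Λ.d_comp _ _ hsA, d_seg_zero]
    funext i; show Λ.d μ i + n i = n i + Λ.d μ i; omega
  · rw [Λ.d_vert]
    funext i; show (0:ℕ) = Λ.d μ i - (n i + Λ.d μ i); omega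
  · rw [Λ.comp_vert, hc]

theorem concatB_dmu (μ : E) (x : InfPath Λ) (hx : x.range = Λ.s μ) :
    concatB μ x hx (Λ.d μ) = μ := by
  have h0 : concatB μ x hx (Λ.d μ) = concatB μ x hx (0 + Λ.d μ) := by rw [zero_add]
  rw [h0, concatB_add]
  have : x.seg 0 0 zero_le = Λ.vert (Λ.s μ) := by
    rw [show x.seg 0 0 zero_le = x.seg 0 0 le_rfl from rfl, x.seg_self 0, ← hx]
    rfl
  rw [this, Λ.comp_vert]

theorem concat_extends (μ : E) (x : InfPath Λ) (hx : x.range = Λ.s μ) :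
    Extends Λ (concat μ x hx) μ x := by
  constructor
  · rw [concat_seg_zero, concatB_dmu]
  · apply InfPath.ext'
    intro n
    have hle1 : (0:Fin k → ℕ) + Λ.d μ ≤ n + Λ.d μ := add_le_add_left zero_le _
    have hle2 : Λ.d μ ≤ n + Λ.d μ := le_add_self
    have lhs : ((concat μ x hx).shift (Λ.d μ)).seg 0 n zero_le =
        (concat μ x hx).seg (Λ.d μ) (n + Λ.d μ) hle2 := by
      rw [shift_seg]
      exact seg_congr (concat μ x hx) (zero_add _) rfl hle1 hle2
    rw [lhs]
    symm
    apply midSeg_unique (d_concatB μ x hx) (fun _ _ h => pdiv_concatB μ x hx h)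
    · rw [concatB_dmu]
      exact s_r_seg hx n zero_le
    · rw [d_seg_zero]
      funext i; show n i = n i + Λ.d μ i - Λ.d μ i; omega
    · rw [concatB_dmu, concatB_add]
    · exact hle2

theorem range_concat (μ : E) (x : InfPath Λ) (hx : x.range = Λ.s μ) :
    (concat μ x hx).range = Λ.r μ := by
  rw [show (concat μ x hx).range = Λ.r (concatB μ x hx 0) from
    congrArg Λ.r (mkPath_seg_zero _ _ 0)]
  rw [concatB, r_initSeg]
  exact Λ.r_comp _ _ (s_r_seg hx _ _)

theorem extends_unique {μ : E} {x y : InfPath Λ} (hx : x.range = Λ.s μ)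
    (hE : Extends Λ y μ x) : y = concat μ x hx := by
  obtain ⟨hE1, hE2⟩ := hE
  have hseg : ∀ (a c : Fin k → ℕ) (h : a ≤ c),
      y.seg (a + Λ.d μ) (c + Λ.d μ) (add_le_add_left h _) = x.seg a c h := by
    intro a c h
    exact congrArg (fun z : InfPath Λ => z.seg a c h) hE2
  apply InfPath.ext'
  intro n
  rw [concat_seg_zero]
  set M := (n - Λ.d μ) + Λ.d μ with hM
  have hnM : n ≤ M := fun i => by
    show n i ≤ n i - Λ.d μ i + Λ.d μ i; omega
  apply initSeg_unique (ζ := y.seg n M hnM)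
  · exact y.src 0 n M zero_le hnM
  · exact d_seg_zero y n zero_le
  · rw [y.d_seg]
    funext i; show M i - n i = Λ.d μ i - n i
    have : M i = n i - Λ.d μ i + Λ.d μ i := rfl
    omega
  · rw [y.comp_seg 0 n M zero_le hnM]
    have h1 : x.seg 0 (n - Λ.d μ) zero_le =
        y.seg (0 + Λ.d μ) ((n - Λ.d μ) + Λ.d μ) (add_le_add_left zero_le _) :=
      (hseg 0 (n - Λ.d μ) zero_le).symm
    have h2 : y.seg (0 + Λ.d μ) ((n - Λ.d μ) + Λ.d μ) (add_le_add_left zero_le _) =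
        y.seg (Λ.d μ) M le_add_self :=
      seg_congr y (zero_add _) rfl (add_le_add_left zero_le _) le_add_self
    rw [h1, h2]
    have h3 : Λ.comp μ (y.seg (Λ.d μ) M le_add_self) =
        Λ.comp (y.seg 0 (Λ.d μ) zero_le) (y.seg (Λ.d μ) M le_add_self) := by
      rw [hE1]
    rw [h3, y.comp_seg 0 (Λ.d μ) M zero_le le_add_self]

end Concat
section ExistsPath

variable {k : ℕ} {V E : Type} {Λ : PGraphStr (Fin k → ℕ) V E}

/-- A sequence of longer and longer paths out of `v`. -/
noncomputable def stepPath (hrf : RowFiniteNoSources Λ) (v : V) : ℕ → E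
  | 0 => Λ.vert v
  | j+1 => Λ.comp (stepPath hrf v j)
      ((hrf (Λ.s (stepPath hrf v j)) (fun _ => 1)).2).choose

theorem stepPath_choose_spec (hrf : RowFiniteNoSources Λ) (w : V) (n : Fin k → ℕ) :
    Λ.r ((hrf w n).2).choose = w ∧ Λ.d ((hrf w n).2).choose = n :=
  ((hrf w n).2).choose_spec

theorem r_stepPath (hrf : RowFiniteNoSources Λ) (v : V) (j : ℕ) :
    Λ.r (stepPath hrf v j) = v := by
  induction j with
  | zero => exact Λ.r_vert v
  | succ j ih =>
    show Λ.r (Λ.comp _ _) = v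
    rw [Λ.r_comp _ _ (stepPath_choose_spec hrf _ _).1.symm]
    exact ih

theorem d_stepPath (hrf : RowFiniteNoSources Λ) (v : V) (j : ℕ) :
    Λ.d (stepPath hrf v j) = fun _ => j := by
  induction j with
  | zero => exact Λ.d_vert v
  | succ j ih =>
    show Λ.d (Λ.comp _ _) = _
    rw [Λ.d_comp _ _ (stepPath_choose_spec hrf _ _).1.symm, ih,
      (stepPath_choose_spec hrf _ (fun _ => 1)).2]
    funext i; show j + 1 = j + 1; rfl

theorem pdiv_stepPath (hrf : RowFiniteNoSources Λ) (v : V) {j j' : ℕ} (h : j ≤ j') :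
    PDiv Λ (stepPath hrf v j) (stepPath hrf v j') := by
  induction j' with
  | zero =>
    have : j = 0 := Nat.le_zero.mp h
    subst this; exact pdiv_refl _
  | succ j' ih =>
    rcases Nat.lt_or_ge j (j' + 1) with h' | h'
    · refine pdiv_trans (ih (Nat.lt_succ_iff.mp h')) ?_
      exact ⟨_, (stepPath_choose_spec hrf _ _).1.symm, rfl⟩
    · have : j = j' + 1 := le_antisymm h h'
      subst this; exact pdiv_refl _

theorem d_stepPath_sup (hrf : RowFiniteNoSources Λ) (v : V) {n : Fin k → ℕ} {j : ℕ}
    (h : ∀ i, n i ≤ j) : Λ.d (stepPath hrf v j) = n + ((fun _ => j) - n) := by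
  rw [d_stepPath]
  funext i
  have := h i
  show j = n i + (j - n i)
  omega

theorem le_sup_univ (n : Fin k → ℕ) (i : Fin k) : n i ≤ Finset.univ.sup n :=
  Finset.le_sup (Finset.mem_univ i)

/-- The initial-segment family of a chosen infinite path out of `v`. -/
noncomputable def pathB (hrf : RowFiniteNoSources Λ) (v : V) (n : Fin k → ℕ) : E :=
  initSeg Λ (stepPath hrf v (Finset.univ.sup n)) n ((fun _ => Finset.univ.sup n) - n)
    (d_stepPath_sup hrf v (le_sup_univ n))

theorem d_pathB (hrf : RowFiniteNoSources Λ) (v : V) (n : Fin k → ℕ) :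
    Λ.d (pathB hrf v n) = n := d_initSeg _ _ _ _

theorem pdiv_pathB (hrf : RowFiniteNoSources Λ) (v : V) {m n : Fin k → ℕ}
    (hmn : m ≤ n) : PDiv Λ (pathB hrf v m) (pathB hrf v n) := by
  have hJ : Finset.univ.sup m ≤ Finset.univ.sup n :=
    Finset.sup_mono_fun (fun i _ => hmn i)
  have hdm : Λ.d (stepPath hrf v (Finset.univ.sup n)) =
      m + ((fun _ => Finset.univ.sup n) - m) :=
    d_stepPath_sup hrf v (fun i => le_trans (le_sup_univ m i) hJ)
  have h1 : PDiv Λ (pathB hrf v m) (stepPath hrf v (Finset.univ.sup n)) :=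
    pdiv_trans (pdiv_initSeg _ _ _ _) (pdiv_stepPath hrf v hJ)
  have h2 : pathB hrf v m = initSeg Λ (stepPath hrf v (Finset.univ.sup n)) m
      ((fun _ => Finset.univ.sup n) - m) hdm :=
    eq_initSeg_of_pdiv h1 (d_pathB hrf v m) hdm
  rw [h2]
  exact initSeg_pdiv_initSeg hmn hdm (d_stepPath_sup hrf v (le_sup_univ n))

theorem exists_infPath (hrf : RowFiniteNoSources Λ) (v : V) :
    ∃ x : InfPath Λ, x.range = v := by
  refine ⟨mkPath (pathB hrf v) (d_pathB hrf v) (fun _ _ h => pdiv_pathB hrf v h), ?_⟩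
  rw [mkPath_range]
  rw [pathB, r_initSeg]
  exact r_stepPath hrf v _

end ExistsPath
section Per

variable {k : ℕ} {V E : Type} {Λ : PGraphStr (Fin k → ℕ) V E}

theorem per_seg {x : InfPath Λ} {p q : Fin k → ℕ} (hper : x.shift p = x.shift q)
    (a c : Fin k → ℕ) (h : a ≤ c) :
    x.seg (a + p) (c + p) (add_le_add_left h p) =
      x.seg (a + q) (c + q) (add_le_add_left h q) :=
  congrArg (fun z : InfPath Λ => z.seg a c h) hper

end Per

theorem stmt15' (k : ℕ) (V E : Type) (Λ : PGraphStr (Fin k → ℕ) V E)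
    (hrf : RowFiniteNoSources Λ)
    (p q : Fin k → ℕ) :
    (p, q) ∈ SigmaL Λ ↔ (fun i => (p i : ℤ) - (q i : ℤ)) ∈ PerSet Λ := by
  constructor
  · -- Σ → Per
    intro hSig
    obtain ⟨v, hv⟩ := Set.mem_iUnion.mp hSig
    have hv' : ∀ x : InfPath Λ, x.range = v → x.shift p = x.shift q := hv
    obtain ⟨x, hx⟩ := exists_infPath hrf v
    set m : Fin k → ℕ := fun i => max (p i) (q i) with hm
    have hpm : p ≤ m := fun i => le_max_left _ _
    have hqm : q ≤ m := fun i => le_max_right _ _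
    set n₂ : Fin k → ℕ := (m - p) + q with hn₂
    have hqn₂ : q ≤ n₂ := le_add_self
    have e1 : (m - p) + p = m := by
      funext i; have hi : p i ≤ m i := hpm i
      show m i - p i + p i = m i; omega
    set μ : E := x.seg 0 m zero_le with hμ
    set ν : E := x.seg 0 n₂ zero_le with hν
    have hdμ : Λ.d μ = m := d_seg_zero x m _
    have hdν : Λ.d ν = n₂ := d_seg_zero x n₂ _
    -- source equality
    have hseg_mm : x.seg m m le_rfl = x.seg n₂ n₂ le_rfl := by
      have h1 := per_seg (hv' x hx) (m - p) (m - p) le_rfl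
      have h2 : x.seg ((m - p) + p) ((m - p) + p)
          (add_le_add_left le_rfl p) = x.seg m m le_rfl :=
        seg_congr x e1 e1 _ _
      have h3 : x.seg ((m - p) + q) ((m - p) + q)
          (add_le_add_left le_rfl q) = x.seg n₂ n₂ le_rfl :=
        seg_congr x rfl rfl _ _
      rw [← h2, ← h3]; exact h1
    have hsμν : Λ.s μ = Λ.s ν := by
      rw [hμ, hν, s_seg, s_seg, hseg_mm]
    -- periodicity of x segments
    have hxqn : x.seg q n₂ hqn₂ = x.seg p m hpm := by
      have h1 := per_seg (hv' x hx) 0 (m - p) zero_le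
      have h2 : x.seg (0 + p) ((m - p) + p) (add_le_add_left zero_le p) =
          x.seg p m hpm := seg_congr x (zero_add _) e1 _ _
      have h3 : x.seg (0 + q) ((m - p) + q) (add_le_add_left zero_le q) =
          x.seg q n₂ hqn₂ := seg_congr x (zero_add _) rfl _ _
      rw [← h2, ← h3]; exact h1.symm
    refine ⟨μ, ν, ⟨hsμν, ?_⟩, ?_⟩
    · -- the equivalence μ ∼ ν
      intro t y z ht hEy hEz
      have htν : t.range = Λ.s ν := ht.trans hsμν
      have hy : y = concat μ t ht := extends_unique ht hEy
      have hz : z = concat ν t htν := extends_unique htν hEz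
      suffices hYZ : Extends Λ (concat μ t ht) ν t by
        rw [hy, hz]; exact extends_unique htν hYZ
      set Y : InfPath Λ := concat μ t ht with hY
      have hYrange : Y.range = v := by
        rw [hY, range_concat, hμ, range_r x m zero_le, hx]
      have hperY : Y.shift p = Y.shift q := hv' Y hYrange
      have hY0m : Y.seg 0 m zero_le = x.seg 0 m zero_le := by
        have hc : Y.seg 0 m zero_le = Y.seg 0 (Λ.d μ) zero_le :=
          seg_congr Y rfl hdμ.symm _ _
        rw [hc, (concat_extends μ t ht).1, hμ]
      have hY0q : Y.seg 0 q zero_le = x.seg 0 q zero_le :=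
        (seg_zero_determines hY0m hqm).1
      have hYpm : Y.seg p m hpm = x.seg p m hpm :=
        (seg_zero_determines hY0m hpm).2
      have hYqn : Y.seg q n₂ hqn₂ = Y.seg p m hpm := by
        have h1 := per_seg hperY 0 (m - p) zero_le
        have h2 : Y.seg (0 + p) ((m - p) + p) (add_le_add_left zero_le p) =
            Y.seg p m hpm := seg_congr Y (zero_add _) e1 _ _
        have h3 : Y.seg (0 + q) ((m - p) + q) (add_le_add_left zero_le q) =
            Y.seg q n₂ hqn₂ := seg_congr Y (zero_add _) rfl _ _
        rw [← h2, ← h3]; exact h1.symm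
      constructor
      · -- Y(0, d ν) = ν
        have hc : Y.seg 0 (Λ.d ν) zero_le = Y.seg 0 n₂ zero_le :=
          seg_congr Y rfl hdν _ _
        rw [hc, ← Y.comp_seg 0 q n₂ zero_le hqn₂, hY0q, hYqn, hYpm, ← hxqn,
          x.comp_seg 0 q n₂ zero_le hqn₂]
      · -- σ^{d ν}(Y) = t
        have hYm : Y.shift m = t := by
          rw [← hdμ]; exact (concat_extends μ t ht).2
        have hshift : Y.shift n₂ = Y.shift m := by
          apply InfPath.ext'
          intro n
          have hle : m - p ≤ n + (m - p) := le_add_self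
          have h1 := per_seg hperY (m - p) (n + (m - p)) hle
          have e2 : (n + (m - p)) + p = n + m := by
            funext i; have hi : p i ≤ m i := hpm i
            show n i + (m i - p i) + p i = n i + m i; omega
          have e3 : (n + (m - p)) + q = n + n₂ := by
            funext i
            show n i + (m i - p i) + q i = n i + ((m i - p i) + q i); omega
          have h2 : Y.seg ((m - p) + p) ((n + (m - p)) + p)
              (add_le_add_left hle p) = Y.seg m (n + m) le_add_self :=
            seg_congr Y e1 e2 _ _
          have h3 : Y.seg ((m - p) + q) ((n + (m - p)) + q)
              (add_le_add_left hle q) = Y.seg n₂ (n + n₂) le_add_self :=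
            seg_congr Y rfl e3 _ _
          have h4 : (Y.shift n₂).seg 0 n zero_le = Y.seg n₂ (n + n₂) le_add_self := by
            rw [shift_seg]
            exact seg_congr Y (zero_add _) rfl _ le_add_self
          have h5 : (Y.shift m).seg 0 n zero_le = Y.seg m (n + m) le_add_self := by
            rw [shift_seg]
            exact seg_congr Y (zero_add _) rfl _ le_add_self
          rw [h4, h5, ← h2, ← h3]; exact h1.symm
        rw [hdν, hshift, hYm]
    · -- degrees
      funext i
      have h1 : Λ.d μ i = m i := congrFun hdμ i
      have h2 : Λ.d ν i = n₂ i := congrFun hdν i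
      rw [h1, h2]
      have h3 : n₂ i = (m i - p i) + q i := rfl
      have hp : p i ≤ m i := hpm i
      rw [h3]
      push_cast
      omega
  · -- Per → Σ
    rintro ⟨μ, ν, hCK, hg⟩
    refine Set.mem_iUnion.mpr ⟨Λ.s μ, ?_⟩
    intro x hx
    have hxν : x.range = Λ.s ν := hx.trans hCK.1
    have hy := concat_extends μ x hx
    have hz := concat_extends ν x hxν
    have heq : concat μ x hx = concat ν x hxν := hCK.2 x _ _ hx hy hz
    have h1 : (concat μ x hx).shift (Λ.d μ) = x := hy.2
    have h2 : (concat μ x hx).shift (Λ.d ν) = x := by rw [heq]; exact hz.2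
    have hkey : Λ.d ν + p = Λ.d μ + q := by
      funext i
      have h3 : (p i : ℤ) - q i = (Λ.d μ i : ℤ) - Λ.d ν i := congrFun hg i
      show Λ.d ν i + p i = Λ.d μ i + q i
      omega
    show x.shift p = x.shift q
    calc x.shift p = ((concat μ x hx).shift (Λ.d ν)).shift p := by rw [h2]
      _ = (concat μ x hx).shift (Λ.d ν + p) := shift_shift _ _ _
      _ = (concat μ x hx).shift (Λ.d μ + q) := by rw [hkey]
      _ = ((concat μ x hx).shift (Λ.d μ)).shift q := (shift_shift _ _ _).symm
      _ = x.shift q := by rw [h1]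

/-- If `Λ⁰` is a maximal tail, then for `p, q ∈ ℕ^k` we have `(p,q) ∈ Σ_Λ` if and only
if `p - q ∈ Per(Λ)`. -/
theorem stmt15 (k : ℕ) (V E : Type) [Countable E] (Λ : PGraphStr (Fin k → ℕ) V E)
    (hrf : RowFiniteNoSources Λ) (hmt : IsMaximalTail Λ Set.univ)
    (p q : Fin k → ℕ) :
    (p, q) ∈ SigmaL Λ ↔ (fun i => (p i : ℤ) - (q i : ℤ)) ∈ PerSet Λ := by
  exact stmt15' k V E Λ hrf p q
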